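/- For the map f(x,y,z,ω) = (y, g(x)+h(z), ω, g̃(x)−h(z)) on ℝ⁴, the even-index iterates decouple: for all n ∈ ℕ, there exist functions F⁽²ⁿ⁾, G⁽²ⁿ⁾ : ℝ² → ℝ such that the orbit (xₖ,yₖ,zₖ,ωₖ) = f^k(x₀,y₀,z₀,ω₀) satisfies x_{2n} = F⁽²ⁿ⁾(x₀,z₀), y_{2n} = F⁽²ⁿ⁾(y₀,ω₀), z_{2n} = G⁽²ⁿ⁾(x₀,z₀), ω_{2n} = G⁽²ⁿ⁾(y₀,ω₀). -/
import Mathlib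


/-- Even-index iterates of the map decouple into functions `F⁽²ⁿ⁾`, `G⁽²ⁿ⁾` of the
pairs `(x₀, z₀)` and `(y₀, ω₀)`. -/
theorem even_iterates_decouple
    (g gt h : ℝ → ℝ)
    (f : ℝ × ℝ × ℝ × ℝ → ℝ × ℝ × ℝ × ℝ)
    (hf : ∀ x y z w : ℝ, f (x, y, z, w) = (y, g x + h z, w, gt x - h z))
    (n : ℕ) :
    ∃ F G : ℝ × ℝ → ℝ, ∀ x₀ y₀ z₀ w₀ : ℝ,
      f^[2 * n] (x₀, y₀, z₀, w₀) =
        (F (x₀, z₀), F (y₀, w₀), G (x₀, z₀), G (y₀, w₀)) := by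
  induction n with
  | zero => exact ⟨fun p => p.1, fun p => p.2, fun _ _ _ _ => rfl⟩
  | succ n ih =>
    obtain ⟨F, G, hFG⟩ := ih
    refine ⟨fun p => F (g p.1 + h p.2, gt p.1 - h p.2),
            fun p => G (g p.1 + h p.2, gt p.1 - h p.2), fun x₀ y₀ z₀ w₀ => ?_⟩
    have : 2 * (n + 1) = 2 * n + 2 := by ring
    rw [this, Function.iterate_add_apply]
    simp only [Function.iterate_succ, Function.iterate_zero, Function.comp_apply, id_eq,
      hf x₀ y₀ z₀ w₀, hf y₀ (g x₀ + h z₀) w₀ (gt x₀ - h z₀)]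
    exact hFG _ _ _ _
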